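/- Let ε be an admissible cavity with QN eigenvalue ω and mode ψ, and suppose ψ(l,ω;ε) ≠ 0. Then for any bounded measurable direction h on [0,l], the derivative of F(ω; ε + ζh) with respect to ζ at ζ = 0 equals (ω²/(c²ψ(l,ω;ε)))·∫₀^l ψ²(s,ω;ε)·h(s) ds. -/

import Mathlib

open Set intervalIntegral

set_option maxHeartbeats 1600000 in
/-- Directional derivative of `F(ω; ε + ζh)` in `ζ` at `ζ = 0`:
it equals `(ω²/(c²ψ(l)))·∫₀^l ψ²(s) h(s) ds`. -/
theorem directional_derivative_F
    (l c ε₁ ε₂ εoo : ℝ) (hl : 0 < l) (hc : 0 < c)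
    (hε₁ : 1 ≤ ε₁) (h12 : ε₁ < ε₂) (hεoo : 1 ≤ εoo)
    (ε : ℝ → ℝ) (hmeas : Measurable ε) (hεb : ∀ s, ε₁ ≤ ε s ∧ ε s ≤ ε₂)
    (h : ℝ → ℝ) (hhmeas : Measurable h) (hhbd : ∃ M, ∀ s, |h s| ≤ M)
    (ω : ℂ) (hω : ω ≠ 0)
    (Ψ Ψs : ℂ → ℝ → ℂ)
    (hd1 : ∀ ζ, ∀ s ∈ Icc (0 : ℝ) l, HasDerivAt (Ψ ζ) (Ψs ζ s) s)
    (hd2 : ∀ ζ, ∀ s ∈ Icc (0 : ℝ) l,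
      HasDerivAt (Ψs ζ)
        (-(ω ^ 2 / (c : ℂ) ^ 2) * ((ε s : ℂ) + ζ * (h s : ℂ)) * Ψ ζ s) s)
    (h0 : ∀ ζ, Ψ ζ 0 = 0) (h1 : ∀ ζ, Ψs ζ 0 = 1)
    (F : ℂ → ℂ)
    (hF : ∀ ζ, F ζ = Complex.I * ω * ((Real.sqrt εoo / c : ℝ) : ℂ) * Ψ ζ l - Ψs ζ l)
    (hF0 : F 0 = 0) (hψl : Ψ 0 l ≠ 0) :
    HasDerivAt F
      ((ω ^ 2 / ((c : ℂ) ^ 2 * Ψ 0 l)) *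
        (∫ s in (0 : ℝ)..l, (Ψ 0 s) ^ 2 * (h s : ℂ))) 0 := by
  obtain ⟨M, hM⟩ := hhbd
  have hM0 : 0 ≤ M := (abs_nonneg _).trans (hM 0)
  have hc' : (c : ℂ) ≠ 0 := by exact_mod_cast hc.ne'
  set q : ℝ := ‖ω‖ ^ 2 / c ^ 2 with hqdef
  have hq0 : 0 ≤ q := by positivity
  have hnormc : ‖-(ω ^ 2 / (c : ℂ) ^ 2)‖ = q := by
    rw [norm_neg, norm_div, norm_pow, norm_pow, Complex.norm_real,
      Real.norm_eq_abs, abs_of_pos hc]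
  set K : ℝ := max 1 (q * (ε₂ + M)) with hKdef
  have hK1 : (1 : ℝ) ≤ K := le_max_left _ _
  have hK0 : 0 < K := lt_of_lt_of_le one_pos hK1
  set B : ℝ := Real.exp (K * l) with hBdef
  have hB0 : 0 < B := Real.exp_pos _
  have hB1 : (1 : ℝ) ≤ B := Real.one_le_exp (by positivity)
  have hcontΨ : ∀ ζ, ContinuousOn (Ψ ζ) (Icc 0 l) :=
    fun ζ s hs => ((hd1 ζ s hs).continuousAt).continuousWithinAt
  have hcontΨs : ∀ ζ, ContinuousOn (Ψs ζ) (Icc 0 l) :=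
    fun ζ s hs => ((hd2 ζ s hs).continuousAt).continuousWithinAt
  -- the coefficient bound
  have hcoef : ∀ (ζ : ℂ), ‖ζ‖ ≤ 1 → ∀ x, ‖(ε x : ℂ) + ζ * (h x : ℂ)‖ ≤ ε₂ + M := by
    intro ζ hζ x
    calc ‖(ε x : ℂ) + ζ * (h x : ℂ)‖ ≤ ‖(ε x : ℂ)‖ + ‖ζ * (h x : ℂ)‖ := norm_add_le _ _
      _ = |ε x| + ‖ζ‖ * |h x| := by rw [norm_mul, Complex.norm_real, Complex.norm_real, Real.norm_eq_abs, Real.norm_eq_abs]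
      _ ≤ ε₂ + 1 * M := by
          have h1' := (hεb x).1; have h2' := (hεb x).2
          have : |ε x| = ε x := abs_of_pos (by linarith)
          rw [this]
          have := hM x
          have hh0 : 0 ≤ |h x| := abs_nonneg _
          nlinarith [norm_nonneg ζ]
      _ = ε₂ + M := by ring
  -- Step 1: uniform bound on Ψ, Ψs for ‖ζ‖ ≤ 1
  have step1 : ∀ (ζ : ℂ), ‖ζ‖ ≤ 1 → ∀ s ∈ Icc (0 : ℝ) l,
      ‖Ψ ζ s‖ ≤ B ∧ ‖Ψs ζ s‖ ≤ B := by
    intro ζ hζ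
    have main := norm_le_gronwallBound_of_norm_deriv_right_le
      (f := fun s => (Ψ ζ s, Ψs ζ s))
      (f' := fun s => (Ψs ζ s,
        -(ω ^ 2 / (c : ℂ) ^ 2) * ((ε s : ℂ) + ζ * (h s : ℂ)) * Ψ ζ s))
      (δ := 1) (K := K) (ε := 0) (a := 0) (b := l)
      ((hcontΨ ζ).prodMk (hcontΨs ζ))
      (fun x hx => (((hd1 ζ x (Ico_subset_Icc_self hx)).prodMk
        (hd2 ζ x (Ico_subset_Icc_self hx))).hasDerivWithinAt))
      (by simp [h0, h1, Prod.norm_def])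
      ?_
    · intro s hs
      have := main s hs
      rw [gronwallBound_ε0, one_mul, sub_zero] at this
      have hle : Real.exp (K * s) ≤ B := by
        rw [hBdef]
        exact Real.exp_le_exp.2 (by nlinarith [hs.2, hK0])
      have hmax : max ‖Ψ ζ s‖ ‖Ψs ζ s‖ ≤ B := by
        calc max ‖Ψ ζ s‖ ‖Ψs ζ s‖ = ‖((Ψ ζ s, Ψs ζ s) : ℂ × ℂ)‖ := by
              rw [Prod.norm_def]
          _ ≤ Real.exp (K * s) := this
          _ ≤ B := hle
      exact ⟨le_trans (le_max_left _ _) hmax, le_trans (le_max_right _ _) hmax⟩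
    · intro x hx
      simp only [Prod.norm_def, add_zero]
      have hmn : (0:ℝ) ≤ max ‖Ψ ζ x‖ ‖Ψs ζ x‖ :=
        le_trans (norm_nonneg _) (le_max_left _ _)
      apply max_le
      · calc ‖Ψs ζ x‖ ≤ max ‖Ψ ζ x‖ ‖Ψs ζ x‖ := le_max_right _ _
          _ ≤ K * max ‖Ψ ζ x‖ ‖Ψs ζ x‖ := le_mul_of_one_le_left hmn hK1
      · calc ‖-(ω ^ 2 / (c : ℂ) ^ 2) * ((ε x : ℂ) + ζ * (h x : ℂ)) * Ψ ζ x‖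
            = q * ‖(ε x : ℂ) + ζ * (h x : ℂ)‖ * ‖Ψ ζ x‖ := by
              rw [norm_mul, norm_mul, hnormc]
          _ ≤ (q * (ε₂ + M)) * max ‖Ψ ζ x‖ ‖Ψs ζ x‖ := by
              have h1' := hcoef ζ hζ x
              have h2' : ‖Ψ ζ x‖ ≤ max ‖Ψ ζ x‖ ‖Ψs ζ x‖ := le_max_left _ _
              have hp : ‖(ε x : ℂ) + ζ * (h x : ℂ)‖ * ‖Ψ ζ x‖
                  ≤ (ε₂ + M) * max ‖Ψ ζ x‖ ‖Ψs ζ x‖ :=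
                mul_le_mul h1' h2' (norm_nonneg _) (by nlinarith)
              calc q * ‖(ε x : ℂ) + ζ * (h x : ℂ)‖ * ‖Ψ ζ x‖
                  = q * (‖(ε x : ℂ) + ζ * (h x : ℂ)‖ * ‖Ψ ζ x‖) := by ring
                _ ≤ q * ((ε₂ + M) * max ‖Ψ ζ x‖ ‖Ψs ζ x‖) :=
                    mul_le_mul_of_nonneg_left hp hq0
                _ = (q * (ε₂ + M)) * max ‖Ψ ζ x‖ ‖Ψs ζ x‖ := by ring
          _ ≤ K * max ‖Ψ ζ x‖ ‖Ψs ζ x‖ :=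
              mul_le_mul_of_nonneg_right (le_max_right _ _) hmn
  -- Step 2: Lipschitz dependence on ζ
  have step2 : ∀ (ζ : ℂ), ‖ζ‖ ≤ 1 → ∀ s ∈ Icc (0 : ℝ) l,
      ‖Ψ ζ s - Ψ 0 s‖ ≤ ‖ζ‖ * (q * M * B * B) := by
    intro ζ hζ
    have main := norm_le_gronwallBound_of_norm_deriv_right_le
      (f := fun s => (Ψ ζ s - Ψ 0 s, Ψs ζ s - Ψs 0 s))
      (f' := fun s => (Ψs ζ s - Ψs 0 s,
        -(ω ^ 2 / (c : ℂ) ^ 2) * ((ε s : ℂ) + ζ * (h s : ℂ)) * Ψ ζ s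
          - -(ω ^ 2 / (c : ℂ) ^ 2) * ((ε s : ℂ) + 0 * (h s : ℂ)) * Ψ 0 s))
      (δ := 0) (K := K) (ε := ‖ζ‖ * (q * M * B)) (a := 0) (b := l)
      (((hcontΨ ζ).sub (hcontΨ 0)).prodMk ((hcontΨs ζ).sub (hcontΨs 0)))
      (fun x hx =>
        (((hd1 ζ x (Ico_subset_Icc_self hx)).sub
            (hd1 0 x (Ico_subset_Icc_self hx))).prodMk
          ((hd2 ζ x (Ico_subset_Icc_self hx)).sub
            (hd2 0 x (Ico_subset_Icc_self hx)))).hasDerivWithinAt)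
      (by simp [h0, h1, Prod.norm_def])
      ?_
    · intro s hs
      have := main s hs
      rw [gronwallBound_of_K_ne_0 hK0.ne'] at this
      simp only [sub_zero, zero_mul, zero_add] at this
      have hfin : ‖ζ‖ * (q * M * B) / K * (Real.exp (K * s) - 1)
          ≤ ‖ζ‖ * (q * M * B * B) := by
        have hε'0 : 0 ≤ ‖ζ‖ * (q * M * B) := by positivity
        have hdivle : ‖ζ‖ * (q * M * B) / K ≤ ‖ζ‖ * (q * M * B) := by
          apply div_le_self hε'0 hK1
        have hexple : Real.exp (K * s) - 1 ≤ B := by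
          have : Real.exp (K * s) ≤ B := by
            rw [hBdef]; exact Real.exp_le_exp.2 (by nlinarith [hs.2, hK0])
          linarith
        have hexp0 : (0:ℝ) ≤ Real.exp (K * s) - 1 := by
          have := Real.one_le_exp (show (0:ℝ) ≤ K * s by nlinarith [hs.1, hK0])
          linarith
        calc ‖ζ‖ * (q * M * B) / K * (Real.exp (K * s) - 1)
            ≤ ‖ζ‖ * (q * M * B) * B := by nlinarith
          _ = ‖ζ‖ * (q * M * B * B) := by ring
      calc ‖Ψ ζ s - Ψ 0 s‖
          ≤ ‖((Ψ ζ s - Ψ 0 s, Ψs ζ s - Ψs 0 s) : ℂ × ℂ)‖ := by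
            rw [Prod.norm_def]; exact le_max_left _ _
        _ ≤ ‖ζ‖ * (q * M * B) / K * (Real.exp (K * s) - 1) := this
        _ ≤ ‖ζ‖ * (q * M * B * B) := hfin
    · intro x hx
      have hxI : x ∈ Icc (0:ℝ) l := Ico_subset_Icc_self hx
      simp only [Prod.norm_def]
      have hmn : (0:ℝ) ≤ max ‖Ψ ζ x - Ψ 0 x‖ ‖Ψs ζ x - Ψs 0 x‖ :=
        le_trans (norm_nonneg _) (le_max_left _ _)
      have hε'0 : 0 ≤ ‖ζ‖ * (q * M * B) := by positivity
      apply max_le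
      · calc ‖Ψs ζ x - Ψs 0 x‖ ≤ max ‖Ψ ζ x - Ψ 0 x‖ ‖Ψs ζ x - Ψs 0 x‖ :=
            le_max_right _ _
          _ ≤ K * max ‖Ψ ζ x - Ψ 0 x‖ ‖Ψs ζ x - Ψs 0 x‖ :=
            le_mul_of_one_le_left hmn hK1
          _ ≤ K * max ‖Ψ ζ x - Ψ 0 x‖ ‖Ψs ζ x - Ψs 0 x‖ + ‖ζ‖ * (q * M * B) := by
            linarith
      · have hrw : -(ω ^ 2 / (c : ℂ) ^ 2) * ((ε x : ℂ) + ζ * (h x : ℂ)) * Ψ ζ x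
            - -(ω ^ 2 / (c : ℂ) ^ 2) * ((ε x : ℂ) + 0 * (h x : ℂ)) * Ψ 0 x
            = -(ω ^ 2 / (c : ℂ) ^ 2) * (ε x : ℂ) * (Ψ ζ x - Ψ 0 x)
              + -(ω ^ 2 / (c : ℂ) ^ 2) * ζ * (h x : ℂ) * Ψ ζ x := by ring
        rw [hrw]
        have hterm1 : ‖-(ω ^ 2 / (c : ℂ) ^ 2) * (ε x : ℂ) * (Ψ ζ x - Ψ 0 x)‖
            ≤ K * max ‖Ψ ζ x - Ψ 0 x‖ ‖Ψs ζ x - Ψs 0 x‖ := by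
          rw [norm_mul, norm_mul, hnormc, Complex.norm_real, Real.norm_eq_abs]
          have h1' := (hεb x).1; have h2' := (hεb x).2
          have hεabs : |ε x| = ε x := abs_of_pos (by linarith)
          rw [hεabs]
          have hqK : q * ε x ≤ K := by
            have : q * ε x ≤ q * (ε₂ + M) := by nlinarith
            exact this.trans (le_max_right _ _)
          have h2'' : ‖Ψ ζ x - Ψ 0 x‖ ≤ max ‖Ψ ζ x - Ψ 0 x‖ ‖Ψs ζ x - Ψs 0 x‖ :=
            le_max_left _ _
          exact mul_le_mul hqK h2'' (norm_nonneg _) hK0.le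
        have hterm2 : ‖-(ω ^ 2 / (c : ℂ) ^ 2) * ζ * (h x : ℂ) * Ψ ζ x‖
            ≤ ‖ζ‖ * (q * M * B) := by
          rw [norm_mul, norm_mul, norm_mul, hnormc, Complex.norm_real, Real.norm_eq_abs]
          have hB' := (step1 ζ hζ x hxI).1
          have hhx := hM x
          have hp : |h x| * ‖Ψ ζ x‖ ≤ M * B :=
            mul_le_mul hhx hB' (norm_nonneg _) hM0
          calc q * ‖ζ‖ * |h x| * ‖Ψ ζ x‖ = ‖ζ‖ * (q * (|h x| * ‖Ψ ζ x‖)) := by ring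
            _ ≤ ‖ζ‖ * (q * (M * B)) := by
                apply mul_le_mul_of_nonneg_left _ (norm_nonneg ζ)
                exact mul_le_mul_of_nonneg_left hp hq0
            _ = ‖ζ‖ * (q * M * B) := by ring
        calc ‖-(ω ^ 2 / (c : ℂ) ^ 2) * (ε x : ℂ) * (Ψ ζ x - Ψ 0 x)
              + -(ω ^ 2 / (c : ℂ) ^ 2) * ζ * (h x : ℂ) * Ψ ζ x‖
            ≤ ‖-(ω ^ 2 / (c : ℂ) ^ 2) * (ε x : ℂ) * (Ψ ζ x - Ψ 0 x)‖
              + ‖-(ω ^ 2 / (c : ℂ) ^ 2) * ζ * (h x : ℂ) * Ψ ζ x‖ := norm_add_le _ _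
          _ ≤ K * max ‖Ψ ζ x - Ψ 0 x‖ ‖Ψs ζ x - Ψs 0 x‖ + ‖ζ‖ * (q * M * B) := by
            linarith
  -- integrability helper
  have intgr : ∀ g : ℝ → ℂ, ContinuousOn g (Icc 0 l) →
      IntervalIntegrable (fun s => (h s : ℂ) * g s) MeasureTheory.volume 0 l := by
    intro g hg
    obtain ⟨Cg, hCg⟩ := isCompact_Icc.exists_bound_of_continuousOn hg
    rw [intervalIntegrable_iff_integrableOn_Ioc_of_le hl.le]
    apply MeasureTheory.IntegrableOn.mono_set _ Ioc_subset_Icc_self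
    refine ⟨?_, ?_⟩
    · exact ((Complex.measurable_ofReal.comp hhmeas).aestronglyMeasurable.restrict).mul
        (hg.aestronglyMeasurable measurableSet_Icc)
    · apply MeasureTheory.HasFiniteIntegral.restrict_of_bounded (C := M * Cg)
        measure_Icc_lt_top
      filter_upwards [MeasureTheory.ae_restrict_mem measurableSet_Icc] with x hx
      rw [norm_mul, Complex.norm_real, Real.norm_eq_abs]
      exact mul_le_mul (hM x) (hCg x hx) (norm_nonneg _) hM0
  -- Wronskian identity
  have key : ∀ ζ : ℂ, Ψs ζ l * Ψ 0 l - Ψ ζ l * Ψs 0 l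
      = (-(ω ^ 2 / (c : ℂ) ^ 2) * ζ) *
        ∫ s in (0:ℝ)..l, (h s : ℂ) * (Ψ ζ s * Ψ 0 s) := by
    intro ζ
    have hG : ∀ x ∈ uIcc (0:ℝ) l,
        HasDerivAt (fun s => Ψs ζ s * Ψ 0 s - Ψ ζ s * Ψs 0 s)
          ((-(ω ^ 2 / (c : ℂ) ^ 2) * ζ) * ((h x : ℂ) * (Ψ ζ x * Ψ 0 x))) x := by
      intro x hx
      rw [uIcc_of_le hl.le] at hx
      have d := ((hd2 ζ x hx).mul (hd1 0 x hx)).sub ((hd1 ζ x hx).mul (hd2 0 x hx))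
      convert d using 1
      · rfl
      · rfl
      ring
    have hint := (intgr (fun s => Ψ ζ s * Ψ 0 s)
      ((hcontΨ ζ).mul (hcontΨ 0))).const_mul (-(ω ^ 2 / (c : ℂ) ^ 2) * ζ)
    have heq := intervalIntegral.integral_eq_sub_of_hasDerivAt hG hint
    rw [intervalIntegral.integral_const_mul] at heq
    rw [heq]
    simp [h0, h1]
  -- identity for F
  have hIa : Ψs 0 l = Complex.I * ω * ((Real.sqrt εoo / c : ℝ) : ℂ) * Ψ 0 l := by
    have hz := hF 0
    rw [hF0] at hz
    linear_combination hz
  have hFeq : ∀ ζ : ℂ, F ζ = (ω ^ 2 / ((c : ℂ) ^ 2 * Ψ 0 l)) * ζ *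
      ∫ s in (0:ℝ)..l, (h s : ℂ) * (Ψ ζ s * Ψ 0 s) := by
    intro ζ
    have hk := key ζ
    have hc2 : ((c : ℂ) ^ 2) ≠ 0 := pow_ne_zero 2 hc'
    have hcc : (c : ℂ) ^ 2 * -(ω ^ 2 / (c : ℂ) ^ 2) = -(ω ^ 2) := by field_simp
    have hk2 : (c : ℂ) ^ 2 * (Ψs ζ l * Ψ 0 l - Ψ ζ l * Ψs 0 l)
        = -(ω ^ 2) * ζ * ∫ s in (0:ℝ)..l, (h s : ℂ) * (Ψ ζ s * Ψ 0 s) := by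
      rw [hk]
      linear_combination (ζ * ∫ s in (0:ℝ)..l, (h s : ℂ) * (Ψ ζ s * Ψ 0 s)) * hcc
    have hden : ((c : ℂ) ^ 2 * Ψ 0 l) ≠ 0 := mul_ne_zero hc2 hψl
    rw [hF ζ]
    rw [show (ω ^ 2 / ((c : ℂ) ^ 2 * Ψ 0 l)) * ζ *
          (∫ s in (0:ℝ)..l, (h s : ℂ) * (Ψ ζ s * Ψ 0 s))
        = (ω ^ 2 * ζ * ∫ s in (0:ℝ)..l, (h s : ℂ) * (Ψ ζ s * Ψ 0 s)) /
          ((c : ℂ) ^ 2 * Ψ 0 l) by ring]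
    rw [eq_div_iff hden]
    linear_combination (-((c : ℂ) ^ 2 * Ψ ζ l)) * hIa - hk2
  -- the difference formula
  set D : ℂ := (ω ^ 2 / ((c : ℂ) ^ 2 * Ψ 0 l)) *
    (∫ s in (0 : ℝ)..l, (Ψ 0 s) ^ 2 * (h s : ℂ)) with hD
  have hDrw : D = (ω ^ 2 / ((c : ℂ) ^ 2 * Ψ 0 l)) *
      ∫ s in (0:ℝ)..l, (h s : ℂ) * (Ψ 0 s * Ψ 0 s) := by
    rw [hD]
    congr 1
    apply intervalIntegral.integral_congr
    intro x _
    ring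
  have hdiffeq : ∀ ζ : ℂ, F ζ - F 0 - (ζ - 0) • D
      = (ω ^ 2 / ((c : ℂ) ^ 2 * Ψ 0 l)) * ζ *
        ∫ s in (0:ℝ)..l, (h s : ℂ) * ((Ψ ζ s - Ψ 0 s) * Ψ 0 s) := by
    intro ζ
    rw [hF0, hFeq ζ, sub_zero, sub_zero, smul_eq_mul, hDrw]
    rw [show (∫ s in (0:ℝ)..l, (h s : ℂ) * ((Ψ ζ s - Ψ 0 s) * Ψ 0 s))
        = (∫ s in (0:ℝ)..l, ((h s : ℂ) * (Ψ ζ s * Ψ 0 s) - (h s : ℂ) * (Ψ 0 s * Ψ 0 s)))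
      from intervalIntegral.integral_congr (fun x _ => by ring)]
    rw [intervalIntegral.integral_sub (intgr (fun s => Ψ ζ s * Ψ 0 s) ((hcontΨ ζ).mul (hcontΨ 0)))
      (intgr (fun s => Ψ 0 s * Ψ 0 s) ((hcontΨ 0).mul (hcontΨ 0)))]
    ring
  -- conclude
  rw [hasDerivAt_iff_isLittleO]
  have hbig : (fun ζ : ℂ => F ζ - F 0 - (ζ - 0) • D) =O[nhds 0] fun ζ => ζ * ζ := by
    rw [Asymptotics.isBigO_iff]
    refine ⟨‖ω ^ 2 / ((c : ℂ) ^ 2 * Ψ 0 l)‖ * (M * (q * M * B * B) * B * l), ?_⟩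
    have h1ball : ∀ᶠ ζ : ℂ in nhds 0, ‖ζ‖ ≤ 1 := by
      filter_upwards [Metric.closedBall_mem_nhds (0:ℂ) one_pos] with ζ hζ
      simpa using mem_closedBall_iff_norm.1 hζ
    filter_upwards [h1ball] with ζ hζ
    rw [hdiffeq ζ]
    have hInt : ‖∫ s in (0:ℝ)..l, (h s : ℂ) * ((Ψ ζ s - Ψ 0 s) * Ψ 0 s)‖
        ≤ M * (‖ζ‖ * (q * M * B * B)) * B * |l - 0| := by
      apply intervalIntegral.norm_integral_le_of_norm_le_const
      intro x hx
      rw [uIoc_of_le hl.le] at hx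
      have hxI : x ∈ Icc (0:ℝ) l := Ioc_subset_Icc_self hx
      rw [norm_mul, norm_mul, Complex.norm_real, Real.norm_eq_abs]
      have hb1 := hM x
      have hb2 := step2 ζ hζ x hxI
      have hb3 := (step1 0 (by simp) x hxI).1
      have hz2 : (0:ℝ) ≤ ‖ζ‖ * (q * M * B * B) := by positivity
      have hp : ‖Ψ ζ x - Ψ 0 x‖ * ‖Ψ 0 x‖ ≤ (‖ζ‖ * (q * M * B * B)) * B :=
        mul_le_mul hb2 hb3 (norm_nonneg _) hz2
      calc |h x| * (‖Ψ ζ x - Ψ 0 x‖ * ‖Ψ 0 x‖)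
          ≤ M * ((‖ζ‖ * (q * M * B * B)) * B) :=
            mul_le_mul hb1 hp (mul_nonneg (norm_nonneg _) (norm_nonneg _)) hM0
        _ = M * (‖ζ‖ * (q * M * B * B)) * B := by ring
    rw [norm_mul, norm_mul, norm_mul]
    rw [show |l - (0:ℝ)| = l by rw [sub_zero, abs_of_pos hl]] at hInt
    calc ‖ω ^ 2 / ((c : ℂ) ^ 2 * Ψ 0 l)‖ * ‖ζ‖ *
          ‖∫ s in (0:ℝ)..l, (h s : ℂ) * ((Ψ ζ s - Ψ 0 s) * Ψ 0 s)‖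
        ≤ ‖ω ^ 2 / ((c : ℂ) ^ 2 * Ψ 0 l)‖ * ‖ζ‖ *
          (M * (‖ζ‖ * (q * M * B * B)) * B * l) :=
          mul_le_mul_of_nonneg_left hInt (by positivity)
      _ = ‖ω ^ 2 / ((c : ℂ) ^ 2 * Ψ 0 l)‖ * (M * (q * M * B * B) * B * l) *
          (‖ζ‖ * ‖ζ‖) := by ring
  have hsmall : (fun ζ : ℂ => ζ * ζ) =o[nhds 0] fun ζ : ℂ => ζ - 0 := by
    simp only [sub_zero]
    have h1 : (fun ζ : ℂ => ζ) =o[nhds 0] fun _ : ℂ => (1:ℂ) :=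
      (Asymptotics.isLittleO_one_iff ℂ).2 (continuous_id.tendsto 0)
    have := (Asymptotics.isBigO_refl (fun ζ : ℂ => ζ) (nhds 0)).mul_isLittleO h1
    simpa using this
  exact hbig.trans_isLittleO hsmall
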